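/- Let N ≥ 1 and let f, g : 2^{1,...,N} → ℝ be defined by f(Λ) = log₂(1 + Σ_{i∈Λ} c_i) and g(Λ) = log₂(1 + (1/N)·Σ_{i∈Λ} b_i) with b_i, c_i ≥ 0. Then for every Λ ⊆ {1,...,N}: [log₂(1 + Σ_{i∈Λᶜ} b_i) + log₂(1 + (Σ_{i∈Λ} √c_i)²)] − [g(Λᶜ) + f(Λ)] ≤ 2·log₂ N. -/

import Mathlib

open Finset

lemma logb_sub_le (N x y : ℝ) (hx : 0 < x) (hy : 0 < y) (hN : 1 ≤ N) (h : x ≤ N * y) :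
    Real.logb 2 x - Real.logb 2 y ≤ Real.logb 2 N := by
  have hle : Real.logb 2 x ≤ Real.logb 2 (N * y) :=
    Real.logb_le_logb_of_le one_lt_two hx h
  rw [Real.logb_mul (by positivity) (ne_of_gt hy)] at hle
  linarith

theorem stmt_5 (N : ℕ) (hN : 1 ≤ N) (b c : Fin N → ℝ)
    (hb : ∀ i, 0 ≤ b i) (hc : ∀ i, 0 ≤ c i)
    (f g : Finset (Fin N) → ℝ)
    (hf : ∀ Λ : Finset (Fin N), f Λ = Real.logb 2 (1 + ∑ i ∈ Λ, c i))
    (hg : ∀ Λ : Finset (Fin N), g Λ = Real.logb 2 (1 + (1 / N) * ∑ i ∈ Λ, b i))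
    (Λ : Finset (Fin N)) :
    (Real.logb 2 (1 + ∑ i ∈ Λᶜ, b i)
        + Real.logb 2 (1 + (∑ i ∈ Λ, Real.sqrt (c i)) ^ 2))
      - (g Λᶜ + f Λ) ≤ 2 * Real.logb 2 N := by
  rw [hf, hg]
  have hN1 : (1:ℝ) ≤ N := by exact_mod_cast hN
  have hSb : 0 ≤ ∑ i ∈ Λᶜ, b i := Finset.sum_nonneg fun i _ => hb i
  have hSc : 0 ≤ ∑ i ∈ Λ, c i := Finset.sum_nonneg fun i _ => hc i
  have h1 : Real.logb 2 (1 + ∑ i ∈ Λᶜ, b i)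
      - Real.logb 2 (1 + (1 / N) * ∑ i ∈ Λᶜ, b i) ≤ Real.logb 2 N := by
    apply logb_sub_le _ _ _ (by positivity) (by positivity) hN1
    have : (N:ℝ) * ((1/N) * ∑ i ∈ Λᶜ, b i) = ∑ i ∈ Λᶜ, b i := by
      field_simp
    nlinarith
  have h2 : Real.logb 2 (1 + (∑ i ∈ Λ, Real.sqrt (c i)) ^ 2)
      - Real.logb 2 (1 + ∑ i ∈ Λ, c i) ≤ Real.logb 2 N := by
    apply logb_sub_le _ _ _ (by positivity) (by positivity) hN1
    have hcs : (∑ i ∈ Λ, Real.sqrt (c i)) ^ 2 ≤ Λ.card * ∑ i ∈ Λ, Real.sqrt (c i) ^ 2 :=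
      sq_sum_le_card_mul_sum_sq
    have hrw : ∑ i ∈ Λ, Real.sqrt (c i) ^ 2 = ∑ i ∈ Λ, c i :=
      Finset.sum_congr rfl fun i _ => Real.sq_sqrt (hc i)
    have hcard : (Λ.card : ℝ) ≤ N := by
      exact_mod_cast (Finset.card_le_card (Finset.subset_univ Λ)).trans
        (le_of_eq (Finset.card_fin N))
    rw [hrw] at hcs
    nlinarith
  linarith
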